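/- Let m ≥ 2 and let Ω be a nonempty open bounded convex subset of ℝ^m. Then diam(Ω) ≤ K·𝒥(Ω)^{1/2}·|Ω|^{−1/2} with K = 4·(m(m+1)²(m+2))^{1/2}; equivalently, 𝒥(Ω) ≥ diam(Ω)²·|Ω| / (16·m·(m+1)²·(m+2)). Here 𝒥(Ω) = (1/(2|Ω|))·∫_{Ω×Ω} |x−y|² dx dy is the moment of inertia of Ω with respect to its centre of mass. -/

import Mathlib

open MeasureTheory Metric
open scoped ENNReal

/-- The moment of inertia of a set `Ω ⊆ ℝ^m` with respect to its centre of mass: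
`𝒥(Ω) = (1/(2|Ω|)) ∬_{Ω×Ω} |x-y|² dx dy`. -/
noncomputable def momentOfInertia {m : ℕ} (Ω : Set (EuclideanSpace ℝ (Fin m))) : ℝ :=
  (1 / (2 * (volume Ω).toReal)) * ∫ p in Ω ×ˢ Ω, dist p.1 p.2 ^ 2


lemma aux_push {m : ℕ} {Ω : Set (EuclideanSpace ℝ (Fin m))}
    (hopen : IsOpen Ω) (hconv : Convex ℝ Ω)
    {c : EuclideanSpace ℝ (Fin m)} (hc : c ∈ closure Ω)
    (w : EuclideanSpace ℝ (Fin m)) (θ lam : ℝ) (h0 : 0 < lam) (h1 : lam < 1) :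
    ENNReal.ofReal (lam ^ m) * volume (Ω ∩ {x | θ ≤ (inner ℝ w x : ℝ)}) ≤
      volume (Ω ∩ {x | θ + (1 - lam) * ((inner ℝ w c : ℝ) - θ) ≤ (inner ℝ w x : ℝ)}) := by
  have key : AffineMap.homothety c lam '' (Ω ∩ {x | θ ≤ (inner ℝ w x : ℝ)}) ⊆
      Ω ∩ {x | θ + (1 - lam) * ((inner ℝ w c : ℝ) - θ) ≤ (inner ℝ w x : ℝ)} := by
    rintro y ⟨x, ⟨hxΩ, hxs⟩, rfl⟩
    have hhom : AffineMap.homothety c lam x = lam • x + (1 - lam) • c := by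
      rw [AffineMap.homothety_apply]
      simp only [vsub_eq_sub, vadd_eq_add, smul_sub, sub_smul, one_smul]
      abel
    constructor
    · rw [hhom]
      have := hconv.combo_interior_closure_mem_interior (a := lam) (b := 1 - lam)
        (by rwa [hopen.interior_eq]) hc h0 (by linarith) (by ring)
      rwa [hopen.interior_eq] at this
    · rw [Set.mem_setOf_eq, hhom, inner_add_right, real_inner_smul_right,
        real_inner_smul_right]
      have hxs' : θ ≤ (inner ℝ w x : ℝ) := hxs
      nlinarith [hxs']
  calc ENNReal.ofReal (lam ^ m) * volume (Ω ∩ {x | θ ≤ (inner ℝ w x : ℝ)})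
      = volume (AffineMap.homothety c lam '' (Ω ∩ {x | θ ≤ (inner ℝ w x : ℝ)})) := by
        rw [Measure.addHaar_image_homothety, finrank_euclideanSpace_fin,
          abs_of_nonneg (pow_nonneg h0.le m)]
    _ ≤ _ := measure_mono key

lemma aux_pairs {m : ℕ} {Ω A B : Set (EuclideanSpace ℝ (Fin m))}
    (hbd : Bornology.IsBounded Ω) (hΩm : MeasurableSet Ω)
    (hA : MeasurableSet A) (hB : MeasurableSet B)
    (hAΩ : A ⊆ Ω) (hBΩ : B ⊆ Ω) {r : ℝ} (hr : 0 < r)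
    (hgap : ∀ x ∈ A, ∀ y ∈ B, r ≤ dist x y) :
    2 * r ^ 2 * ((volume A).toReal * (volume B).toReal) ≤
      ∫ p in Ω ×ˢ Ω, dist p.1 p.2 ^ 2 := by
  have hVt : volume Ω ≠ ⊤ := hbd.measure_lt_top.ne
  have hAt : volume A ≠ ⊤ := (lt_of_le_of_lt (measure_mono hAΩ) hbd.measure_lt_top).ne
  have hBt : volume B ≠ ⊤ := (lt_of_le_of_lt (measure_mono hBΩ) hbd.measure_lt_top).ne
  have hdisj : Disjoint A B := by
    rw [Set.disjoint_left]
    intro x hxA hxB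
    have := hgap x hxA x hxB
    simp at this; linarith
  have hcont : Continuous fun p : EuclideanSpace ℝ (Fin m) × EuclideanSpace ℝ (Fin m) =>
      dist p.1 p.2 ^ 2 := (continuous_fst.dist continuous_snd).pow 2
  have hprodvol : volume (Ω ×ˢ Ω) = volume Ω * volume Ω := by
    rw [Measure.volume_eq_prod _ _, Measure.prod_prod]
  have hprodfin : volume (Ω ×ˢ Ω) ≠ ⊤ := by
    rw [hprodvol]; exact ENNReal.mul_ne_top hVt hVt
  have hint : IntegrableOn (fun p : EuclideanSpace ℝ (Fin m) × EuclideanSpace ℝ (Fin m) =>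
      dist p.1 p.2 ^ 2) (Ω ×ˢ Ω) volume := by
    apply Measure.integrableOn_of_bounded hprodfin hcont.aestronglyMeasurable
      (M := diam Ω ^ 2)
    filter_upwards [ae_restrict_mem ((hΩm.prod hΩm))] with p hp
    rcases hp with ⟨hp1, hp2⟩
    rw [Real.norm_eq_abs, abs_of_nonneg (by positivity)]
    have := dist_le_diam_of_mem hbd hp1 hp2
    nlinarith [dist_nonneg (x := p.1) (y := p.2)]
  have hnonneg : ∀ p : EuclideanSpace ℝ (Fin m) × EuclideanSpace ℝ (Fin m),
      0 ≤ dist p.1 p.2 ^ 2 := fun p => by positivity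
  -- integral over A ×ˢ B
  have hAB : ∀ (S T : Set (EuclideanSpace ℝ (Fin m))), MeasurableSet S → MeasurableSet T →
      S ⊆ Ω → T ⊆ Ω → (∀ x ∈ S, ∀ y ∈ T, r ≤ dist x y) →
      r ^ 2 * ((volume S).toReal * (volume T).toReal) ≤
        ∫ p in S ×ˢ T, dist p.1 p.2 ^ 2 := by
    intro S T hS hT hSΩ hTΩ hg
    have hfin : volume (S ×ˢ T) ≠ ⊤ := by
      rw [Measure.volume_eq_prod _ _, Measure.prod_prod]
      exact ENNReal.mul_ne_top (lt_of_le_of_lt (measure_mono hSΩ) hbd.measure_lt_top).ne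
        (lt_of_le_of_lt (measure_mono hTΩ) hbd.measure_lt_top).ne
    have := setIntegral_ge_of_const_le (c := r ^ 2) (hS.prod hT) hfin
      (fun p hp => by
        have := hg p.1 hp.1 p.2 hp.2
        nlinarith [hr.le])
      (hint.mono_set (Set.prod_mono hSΩ hTΩ))
    calc r ^ 2 * ((volume S).toReal * (volume T).toReal)
        = r ^ 2 * (volume (S ×ˢ T)).toReal := by
          rw [Measure.volume_eq_prod _ _, Measure.prod_prod, ENNReal.toReal_mul]
      _ ≤ _ := by rw [smul_eq_mul, mul_comm] at this; exact this
  have h1 := hAB A B hA hB hAΩ hBΩ hgap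
  have h2 := hAB B A hB hA hBΩ hAΩ (fun x hx y hy => by rw [dist_comm]; exact hgap y hy x hx)
  have hdisj2 : Disjoint (A ×ˢ B) (B ×ˢ A) := by
    rw [Set.disjoint_left]
    rintro ⟨x, y⟩ ⟨hx, hy⟩ ⟨hx', hy'⟩
    exact (Set.disjoint_left.1 hdisj) hx hx'
  have hunion : ∫ p in (A ×ˢ B) ∪ (B ×ˢ A), dist p.1 p.2 ^ 2 =
      (∫ p in A ×ˢ B, dist p.1 p.2 ^ 2) + ∫ p in B ×ˢ A, dist p.1 p.2 ^ 2 :=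
    setIntegral_union hdisj2 (hB.prod hA)
      (hint.mono_set (Set.prod_mono hAΩ hBΩ))
      (hint.mono_set (Set.prod_mono hBΩ hAΩ))
  have hsub : (A ×ˢ B) ∪ (B ×ˢ A) ⊆ Ω ×ˢ Ω :=
    Set.union_subset (Set.prod_mono hAΩ hBΩ) (Set.prod_mono hBΩ hAΩ)
  have hmono : ∫ p in (A ×ˢ B) ∪ (B ×ˢ A), dist p.1 p.2 ^ 2 ≤
      ∫ p in Ω ×ˢ Ω, dist p.1 p.2 ^ 2 := by
    apply setIntegral_mono_set hint
    · exact Filter.Eventually.of_forall fun p => hnonneg p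
    · exact Filter.Eventually.of_forall hsub
  calc 2 * r ^ 2 * ((volume A).toReal * (volume B).toReal)
      = r ^ 2 * ((volume A).toReal * (volume B).toReal)
        + r ^ 2 * ((volume B).toReal * (volume A).toReal) := by ring
    _ ≤ (∫ p in A ×ˢ B, dist p.1 p.2 ^ 2) + ∫ p in B ×ˢ A, dist p.1 p.2 ^ 2 :=
        add_le_add h1 h2
    _ = ∫ p in (A ×ˢ B) ∪ (B ×ˢ A), dist p.1 p.2 ^ 2 := hunion.symm
    _ ≤ _ := hmono

set_option maxHeartbeats 2000000

/-- for a nonempty open bounded convex set `Ω ⊆ ℝ^m` (`m ≥ 2`),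
`𝒥(Ω) ≥ diam(Ω)² |Ω| / (16 m (m+1)² (m+2))`, i.e.
`diam(Ω) ≤ 4 (m(m+1)²(m+2))^{1/2} 𝒥(Ω)^{1/2} |Ω|^{-1/2}`. -/
theorem momentOfInertia_ge_diam_sq (m : ℕ) (hm : 2 ≤ m)
    (Ω : Set (EuclideanSpace ℝ (Fin m)))
    (hne : Ω.Nonempty) (hbd : Bornology.IsBounded Ω)
    (hopen : IsOpen Ω) (hconv : Convex ℝ Ω) :
    diam Ω ^ 2 * (volume Ω).toReal / (16 * m * (m + 1) ^ 2 * (m + 2)) ≤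
      momentOfInertia Ω := by
  classical
  haveI : Nontrivial (EuclideanSpace ℝ (Fin m)) := by
    refine ⟨EuclideanSpace.single ⟨0, by omega⟩ 1, 0, fun h => ?_⟩
    have h0 : (EuclideanSpace.single (⟨0, by omega⟩ : Fin m) (1:ℝ)) ⟨0, by omega⟩ =
        (0 : EuclideanSpace ℝ (Fin m)) ⟨0, by omega⟩ := by rw [h]
    rw [EuclideanSpace.single_apply] at h0
    simp at h0
  have hΩm : MeasurableSet Ω := hopen.measurableSet
  set V : ℝ≥0∞ := volume Ω with hVdef
  have hV0 : V ≠ 0 := (hopen.measure_pos volume hne).ne'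
  have hVt : V ≠ ⊤ := hbd.measure_lt_top.ne
  set Vr : ℝ := V.toReal with hVrdef
  have hVr : 0 < Vr := ENNReal.toReal_pos hV0 hVt
  set D : ℝ := diam Ω with hDdef
  have hD0 : 0 < D := by
    rcases lt_or_ge 0 D with h | h
    · exact h
    · exfalso
      have hsub : Ω.Subsingleton := by
        intro x hx y hy
        have h1 := dist_le_diam_of_mem hbd hx hy
        have h2 : dist x y ≤ 0 := le_trans h1 h
        exact dist_le_zero.mp h2
      exact hV0 (hsub.measure_zero volume)
  -- attain the diameter on the compact closure
  obtain ⟨a, ha, b, hb, hab⟩ : ∃ a ∈ closure Ω, ∃ b ∈ closure Ω, dist a b = D := by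
    have hKc : IsCompact (closure Ω) := hbd.isCompact_closure
    have hKne : (closure Ω ×ˢ closure Ω).Nonempty := hne.closure.prod hne.closure
    have hcont : ContinuousOn (fun q : EuclideanSpace ℝ (Fin m) × EuclideanSpace ℝ (Fin m) =>
        dist q.1 q.2) (closure Ω ×ˢ closure Ω) :=
      (continuous_fst.dist continuous_snd).continuousOn
    obtain ⟨z, hz, hmax⟩ := (hKc.prod hKc).exists_isMaxOn hKne hcont
    have hmax' : ∀ x ∈ closure Ω, ∀ y ∈ closure Ω, dist x y ≤ dist z.1 z.2 := by
      intro x hx y hy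
      exact (isMaxOn_iff.mp hmax) (x, y) (Set.mem_prod.2 ⟨hx, hy⟩)
    refine ⟨z.1, hz.1, z.2, hz.2, le_antisymm ?_ ?_⟩
    · exact (dist_le_diam_of_mem hbd.closure hz.1 hz.2).trans_eq (Metric.diam_closure Ω)
    · rw [hDdef, ← Metric.diam_closure (s := Ω)]
      exact diam_le_of_forall_dist_le dist_nonneg hmax'
  set w : EuclideanSpace ℝ (Fin m) := b - a with hwdef
  have hw : ‖w‖ = D := by
    rw [hwdef, ← dist_eq_norm, dist_comm]; exact hab
  have hscont : Continuous fun x : EuclideanSpace ℝ (Fin m) => (inner ℝ w x : ℝ) :=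
    continuous_const.inner continuous_id
  have hww : (inner ℝ w b : ℝ) - (inner ℝ w a : ℝ) = D ^ 2 := by
    have h1 : (inner ℝ w b : ℝ) - inner ℝ w a = (inner ℝ w (b - a) : ℝ) := by
      rw [inner_sub_right]
    rw [h1, ← hwdef, real_inner_self_eq_norm_sq, hw]
  have hs_ub : ∀ x ∈ closure Ω, (inner ℝ w x : ℝ) ≤ inner ℝ w a + D ^ 2 := by
    intro x hx
    have h1 : (inner ℝ w x : ℝ) - inner ℝ w a = (inner ℝ w (x - a) : ℝ) := by
      rw [inner_sub_right]
    have h2 : (inner ℝ w (x - a) : ℝ) ≤ ‖w‖ * ‖x - a‖ := real_inner_le_norm w (x - a)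
    have h3 : ‖x - a‖ = dist x a := (dist_eq_norm x a).symm
    have h4 : dist x a ≤ D := by
      rw [hDdef, ← Metric.diam_closure (s := Ω)]
      exact dist_le_diam_of_mem hbd.closure hx ha
    nlinarith [hD0]
  have hs_lb : ∀ x ∈ closure Ω, (inner ℝ w a : ℝ) ≤ inner ℝ w x := by
    intro x hx
    have h1 : (inner ℝ w b : ℝ) - inner ℝ w x = (inner ℝ w (b - x) : ℝ) := by
      rw [inner_sub_right]
    have h2 : (inner ℝ w (b - x) : ℝ) ≤ ‖w‖ * ‖b - x‖ := real_inner_le_norm w (b - x)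
    have h3 : ‖b - x‖ = dist b x := (dist_eq_norm b x).symm
    have h4 : dist b x ≤ D := by
      rw [hDdef, ← Metric.diam_closure (s := Ω)]
      exact dist_le_diam_of_mem hbd.closure hb hx
    nlinarith [hww]
  -- distribution function
  set G : ℝ → ℝ≥0∞ := fun τ => volume (Ω ∩ {x | (inner ℝ w x : ℝ) < τ}) with hGdef
  have hGmono : Monotone G := fun τ₁ τ₂ h =>
    measure_mono (Set.inter_subset_inter_right _ (fun x hx => lt_of_lt_of_le hx h))
  set SS : Set ℝ := {τ | V / 3 ≤ G τ} with hSSdef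
  have hV3t : V / 3 ≠ ⊤ := (ENNReal.div_lt_top hVt (by norm_num)).ne
  have hSne : ((inner ℝ w a : ℝ) + D ^ 2 + 1) ∈ SS := by
    have he : Ω ∩ {x | (inner ℝ w x : ℝ) < inner ℝ w a + D ^ 2 + 1} = Ω := by
      apply Set.inter_eq_self_of_subset_left
      intro x hx
      exact lt_of_le_of_lt (hs_ub x (subset_closure hx)) (by linarith)
    rw [hSSdef]
    show V / 3 ≤ G _
    rw [hGdef]
    simp only
    rw [he]
    rw [ENNReal.div_le_iff (by norm_num) (by norm_num)]
    exact le_mul_of_one_le_right (by positivity) (by norm_num)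
  have hSbdd : BddBelow SS := by
    refine ⟨inner ℝ w a, fun τ hτ => ?_⟩
    by_contra hlt
    push_neg at hlt
    have he : Ω ∩ {x | (inner ℝ w x : ℝ) < τ} = ∅ := by
      ext x
      simp only [Set.mem_inter_iff, Set.mem_setOf_eq, Set.mem_empty_iff_false, iff_false,
        not_and, not_lt]
      intro hxΩ
      exact le_trans hlt.le (hs_lb x (subset_closure hxΩ))
    have h0 : G τ = 0 := by rw [hGdef]; simp only; rw [he]; exact measure_empty
    have hτ' : V / 3 ≤ G τ := hτ
    rw [h0, le_zero_iff, ENNReal.div_eq_zero_iff] at hτ'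
    rcases hτ' with h | h
    · exact hV0 h
    · exact (by norm_num : (3 : ℝ≥0∞) ≠ ⊤) h
  set p : ℝ := sInf SS with hpdef
  have hGp : G p ≤ V / 3 := by
    have hU : Ω ∩ {x | (inner ℝ w x : ℝ) < p} =
        ⋃ n : ℕ, Ω ∩ {x | (inner ℝ w x : ℝ) < p - 1 / (n + 1)} := by
      ext x
      simp only [Set.mem_iUnion, Set.mem_inter_iff, Set.mem_setOf_eq]
      constructor
      · rintro ⟨hxΩ, hxs⟩
        obtain ⟨n, hn⟩ := exists_nat_one_div_lt (show (0:ℝ) < p - inner ℝ w x by linarith)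
        exact ⟨n, hxΩ, by push_cast at hn ⊢; linarith⟩
      · rintro ⟨n, hxΩ, hxs⟩
        have hpos : (0:ℝ) < 1 / (n + 1) := by positivity
        exact ⟨hxΩ, by linarith⟩
    have hmonoU : Monotone fun n : ℕ => Ω ∩ {x | (inner ℝ w x : ℝ) < p - 1 / (n + 1)} := by
      intro i j hij
      apply Set.inter_subset_inter_right
      intro x hx
      have hij' : ((i:ℝ) + 1) ≤ (j:ℝ) + 1 := by exact_mod_cast Nat.succ_le_succ hij
      have h1 : (1:ℝ) / (j + 1) ≤ 1 / (i + 1) :=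
        one_div_le_one_div_of_le (by positivity) hij'
      simp only [Set.mem_setOf_eq] at hx ⊢
      linarith
    rw [hGdef]
    simp only
    rw [hU, hmonoU.measure_iUnion]
    apply iSup_le
    intro n
    have hτ : p - 1 / (n + 1) ∉ SS := by
      intro hmem
      have hle := csInf_le hSbdd hmem
      have hpos : (0:ℝ) < 1 / ((n:ℝ) + 1) := by positivity
      rw [← hpdef] at hle
      linarith
    rw [hSSdef, Set.mem_setOf_eq, not_le] at hτ
    exact le_of_lt hτ
  have htmeas : MeasurableSet {x : EuclideanSpace ℝ (Fin m) | (inner ℝ w x : ℝ) < p} :=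
    (isOpen_lt hscont continuous_const).measurableSet
  have hdiffeq : Ω \ {x | (inner ℝ w x : ℝ) < p} = Ω ∩ {x | p ≤ (inner ℝ w x : ℝ)} := by
    ext x; simp only [Set.mem_diff, Set.mem_inter_iff, Set.mem_setOf_eq, not_lt]
  have hsplit : G p + volume (Ω ∩ {x | p ≤ (inner ℝ w x : ℝ)}) = V := by
    have h := measure_inter_add_diff (μ := volume) Ω htmeas
    rw [hdiffeq] at h
    exact h
  have hAbove : V / 3 + V / 3 ≤ volume (Ω ∩ {x | p ≤ (inner ℝ w x : ℝ)}) := by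
    have h3 : V / 3 + (V / 3 + V / 3) = V := by
      have hc : V / 3 * 3 = V := ENNReal.div_mul_cancel (by norm_num) (by norm_num)
      calc V / 3 + (V / 3 + V / 3) = V / 3 * 3 := by ring
        _ = V := hc
    have hcancel : V / 3 + (V / 3 + V / 3) ≤ V / 3 + volume (Ω ∩ {x | p ≤ (inner ℝ w x : ℝ)}) := by
      calc V / 3 + (V / 3 + V / 3) = V := h3
        _ = G p + volume (Ω ∩ {x | p ≤ (inner ℝ w x : ℝ)}) := hsplit.symm
        _ ≤ V / 3 + volume (Ω ∩ {x | p ≤ (inner ℝ w x : ℝ)}) := add_le_add_left hGp _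
    exact (ENNReal.add_le_add_iff_left hV3t).mp hcancel
  have hBelow : V / 3 ≤ volume (Ω ∩ {x | (inner ℝ w x : ℝ) ≤ p}) := by
    have hI : Ω ∩ {x | (inner ℝ w x : ℝ) ≤ p} =
        ⋂ n : ℕ, Ω ∩ {x | (inner ℝ w x : ℝ) < p + 1 / (n + 1)} := by
      ext x
      simp only [Set.mem_iInter, Set.mem_inter_iff, Set.mem_setOf_eq]
      constructor
      · rintro ⟨hxΩ, hxs⟩ n
        have hpos : (0:ℝ) < 1 / ((n:ℝ) + 1) := by positivity
        exact ⟨hxΩ, by linarith⟩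
      · intro h
        refine ⟨(h 0).1, ?_⟩
        by_contra hlt
        push_neg at hlt
        obtain ⟨n, hn⟩ := exists_nat_one_div_lt (show (0:ℝ) < inner ℝ w x - p by linarith)
        have := (h n).2
        push_cast at hn
        linarith
    have hanti : Antitone fun n : ℕ => Ω ∩ {x | (inner ℝ w x : ℝ) < p + 1 / (n + 1)} := by
      intro i j hij
      apply Set.inter_subset_inter_right
      intro x hx
      have hij' : ((i:ℝ) + 1) ≤ (j:ℝ) + 1 := by exact_mod_cast Nat.succ_le_succ hij
      have h1 : (1:ℝ) / (j + 1) ≤ 1 / (i + 1) :=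
        one_div_le_one_div_of_le (by positivity) hij'
      simp only [Set.mem_setOf_eq] at hx ⊢
      linarith
    rw [hI, hanti.measure_iInter
      (fun n => (hΩm.inter (isOpen_lt hscont continuous_const).measurableSet).nullMeasurableSet)
      ⟨0, (lt_of_le_of_lt (measure_mono Set.inter_subset_left) hbd.measure_lt_top).ne⟩]
    refine le_iInf fun n => ?_
    have hlt : sInf SS < p + 1 / ((n:ℝ) + 1) := by
      rw [← hpdef]
      have hpos : (0:ℝ) < 1 / ((n:ℝ) + 1) := by positivity
      linarith
    obtain ⟨τ, hτS, hτlt⟩ := exists_lt_of_csInf_lt ⟨_, hSne⟩ hlt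
    exact le_trans hτS (hGmono hτlt.le)
  -- Bernoulli
  have hmR : (2:ℝ) ≤ (m:ℝ) := by exact_mod_cast hm
  have hmpos : (0:ℝ) < m := by linarith
  set lam : ℝ := 1 - 1 / (2 * m) with hlamdef
  have hlaminv : (0:ℝ) < 1 / (2 * (m:ℝ)) := by positivity
  have hlaminv4 : 1 / (2 * (m:ℝ)) ≤ 1 / 4 := by
    apply one_div_le_one_div_of_le <;> linarith
  have hlam0 : 0 < lam := by rw [hlamdef]; linarith
  have hlam1 : lam < 1 := by rw [hlamdef]; linarith
  have hpow : (1/2 : ℝ) ≤ lam ^ m := by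
    have h := one_add_mul_le_pow (a := -(1 / (2 * (m:ℝ)))) (by linarith) m
    have heq : (1:ℝ) + m * (-(1 / (2 * m))) = 1 / 2 := by
      field_simp
      ring
    calc (1/2 : ℝ) = 1 + m * (-(1 / (2 * m))) := heq.symm
      _ ≤ (1 + -(1 / (2 * m))) ^ m := h
      _ = lam ^ m := by rw [hlamdef]; ring_nf
  -- the two sets
  have hsubfin : ∀ S : Set (EuclideanSpace ℝ (Fin m)), S ⊆ Ω → volume S ≠ ⊤ :=
    fun S hS => (lt_of_le_of_lt (measure_mono hS) hbd.measure_lt_top).ne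
  have hV3r : (V / 3).toReal = Vr / 3 := by
    rw [ENNReal.toReal_div]; norm_num; rfl
  have hgapdist : ∀ (A B : Set (EuclideanSpace ℝ (Fin m))) (α β : ℝ),
      A ⊆ Ω → B ⊆ Ω → A ⊆ {x | (inner ℝ w x : ℝ) ≤ α} → B ⊆ {x | β ≤ (inner ℝ w x : ℝ)} →
      D ^ 2 / (4 * m) ≤ β - α → ∀ x ∈ A, ∀ y ∈ B, D / (4 * m) ≤ dist x y := by
    intro A B α β hAΩ hBΩ hAs hBs hgap x hx y hy
    have h1 : (inner ℝ w (y - x) : ℝ) ≤ ‖w‖ * ‖y - x‖ := real_inner_le_norm w (y - x)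
    have h2 : (inner ℝ w (y - x) : ℝ) = inner ℝ w y - inner ℝ w x := by rw [inner_sub_right]
    have h3 : ‖y - x‖ = dist x y := by rw [← dist_eq_norm, dist_comm]
    have h4 : (inner ℝ w x : ℝ) ≤ α := hAs hx
    have h5 : β ≤ (inner ℝ w y : ℝ) := hBs hy
    have hm4 : (0:ℝ) < 4 * m := by linarith
    have h6 : β - α ≤ D * dist x y := by
      rw [hw, h3, h2] at h1
      linarith
    rw [div_le_iff₀ hm4] at hgap ⊢
    nlinarith [hD0, dist_nonneg (x := x) (y := y)]
  have hmain : ∃ A B : Set (EuclideanSpace ℝ (Fin m)), MeasurableSet A ∧ MeasurableSet B ∧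
      A ⊆ Ω ∧ B ⊆ Ω ∧ Vr ^ 2 / 9 ≤ (volume A).toReal * (volume B).toReal ∧
      ∀ x ∈ A, ∀ y ∈ B, D / (4 * m) ≤ dist x y := by
    rcases le_total p ((inner ℝ w a : ℝ) + D ^ 2 / 2) with hp | hp
    · -- push from b: upper part
      set β : ℝ := p + (1 - lam) * ((inner ℝ w b : ℝ) - p) with hβdef
      refine ⟨Ω ∩ {x | (inner ℝ w x : ℝ) ≤ p}, Ω ∩ {x | β ≤ (inner ℝ w x : ℝ)},
        hΩm.inter (isClosed_le hscont continuous_const).measurableSet,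
        hΩm.inter (isClosed_le continuous_const hscont).measurableSet,
        Set.inter_subset_left, Set.inter_subset_left, ?_, ?_⟩
      · -- masses
        have hpush := aux_push hopen hconv hb w p lam hlam0 hlam1
        have hBm : ENNReal.ofReal (1/2) * (V / 3 + V / 3) ≤
            volume (Ω ∩ {x | β ≤ (inner ℝ w x : ℝ)}) := by
          rw [hβdef]
          exact le_trans (mul_le_mul' (ENNReal.ofReal_le_ofReal hpow) hAbove) hpush
        have hArm : Vr / 3 ≤ (volume (Ω ∩ {x | (inner ℝ w x : ℝ) ≤ p})).toReal := by
          rw [← hV3r]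
          exact ENNReal.toReal_mono (hsubfin _ Set.inter_subset_left) hBelow
        have hBrm : Vr / 3 ≤ (volume (Ω ∩ {x | β ≤ (inner ℝ w x : ℝ)})).toReal := by
          have := ENNReal.toReal_mono (hsubfin _ Set.inter_subset_left) hBm
          rw [ENNReal.toReal_mul, ENNReal.toReal_ofReal (by norm_num),
            ENNReal.toReal_add hV3t hV3t, hV3r] at this
          linarith
        have h1 : (0:ℝ) ≤ (volume (Ω ∩ {x | (inner ℝ w x : ℝ) ≤ p})).toReal :=
          ENNReal.toReal_nonneg
        nlinarith [hArm, hBrm, hVr]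
      · -- gap
        apply hgapdist _ _ p β Set.inter_subset_left Set.inter_subset_left
          Set.inter_subset_right Set.inter_subset_right
        have hβg : β - p = (1 / (2 * m)) * ((inner ℝ w b : ℝ) - p) := by
          rw [hβdef, hlamdef]; ring
        have hwb : (inner ℝ w b : ℝ) = inner ℝ w a + D ^ 2 := by linarith [hww]
        have hgap2 : D ^ 2 / 2 ≤ (inner ℝ w b : ℝ) - p := by rw [hwb]; linarith
        have h7 : (1 / (2 * (m:ℝ))) * (D ^ 2 / 2) = D ^ 2 / (4 * m) := by
          field_simp
          ring
        have h8 : (1 / (2 * (m:ℝ))) * (D ^ 2 / 2) ≤ (1 / (2 * m)) * ((inner ℝ w b : ℝ) - p) :=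
          mul_le_mul_of_nonneg_left hgap2 hlaminv.le
        linarith
    · -- push from a: lower part
      set α : ℝ := p - (1 - lam) * (p - (inner ℝ w a : ℝ)) with hαdef
      refine ⟨Ω ∩ {x | (inner ℝ w x : ℝ) ≤ α}, Ω ∩ {x | p ≤ (inner ℝ w x : ℝ)},
        hΩm.inter (isClosed_le hscont continuous_const).measurableSet,
        hΩm.inter (isClosed_le continuous_const hscont).measurableSet,
        Set.inter_subset_left, Set.inter_subset_left, ?_, ?_⟩
      · have hpush := aux_push hopen hconv ha (-w) (-p) lam hlam0 hlam1
        have hset1 : {x : EuclideanSpace ℝ (Fin m) | -p ≤ (inner ℝ (-w) x : ℝ)} =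
            {x | (inner ℝ w x : ℝ) ≤ p} := by
          ext x; simp only [Set.mem_setOf_eq, inner_neg_left]
          constructor <;> intro h <;> linarith
        have hset2 : {x : EuclideanSpace ℝ (Fin m) |
            -p + (1 - lam) * ((inner ℝ (-w) a : ℝ) - (-p)) ≤ (inner ℝ (-w) x : ℝ)} =
            {x | (inner ℝ w x : ℝ) ≤ α} := by
          ext x; simp only [Set.mem_setOf_eq, inner_neg_left, hαdef]
          constructor <;> intro h <;> linarith
        rw [hset1, hset2] at hpush
        have hAm : ENNReal.ofReal (1/2) * (V / 3) ≤
            volume (Ω ∩ {x | (inner ℝ w x : ℝ) ≤ α}) :=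
          le_trans (mul_le_mul' (ENNReal.ofReal_le_ofReal hpow) hBelow) hpush
        have hArm : Vr / 6 ≤ (volume (Ω ∩ {x | (inner ℝ w x : ℝ) ≤ α})).toReal := by
          have := ENNReal.toReal_mono (hsubfin _ Set.inter_subset_left) hAm
          rw [ENNReal.toReal_mul, ENNReal.toReal_ofReal (by norm_num), hV3r] at this
          linarith
        have hBrm : 2 * Vr / 3 ≤ (volume (Ω ∩ {x | p ≤ (inner ℝ w x : ℝ)})).toReal := by
          have := ENNReal.toReal_mono (hsubfin _ Set.inter_subset_left) hAbove
          rw [ENNReal.toReal_add hV3t hV3t, hV3r] at this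
          linarith
        nlinarith [hArm, hBrm, hVr]
      · apply hgapdist _ _ α p Set.inter_subset_left Set.inter_subset_left
          Set.inter_subset_right Set.inter_subset_right
        have hαg : p - α = (1 / (2 * m)) * (p - (inner ℝ w a : ℝ)) := by
          rw [hαdef, hlamdef]; ring
        have hgap2 : D ^ 2 / 2 ≤ p - (inner ℝ w a : ℝ) := by linarith
        have h7 : (1 / (2 * (m:ℝ))) * (D ^ 2 / 2) = D ^ 2 / (4 * m) := by
          field_simp
          ring
        have h8 : (1 / (2 * (m:ℝ))) * (D ^ 2 / 2) ≤ (1 / (2 * m)) * (p - (inner ℝ w a : ℝ)) :=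
          mul_le_mul_of_nonneg_left hgap2 hlaminv.le
        linarith
  obtain ⟨A, B, hAm, hBm, hAΩ, hBΩ, hprod, hgap⟩ := hmain
  have hr : 0 < D / (4 * m) := by positivity
  have hkey := aux_pairs hbd hΩm hAm hBm hAΩ hBΩ hr hgap
  have hI : 2 * (D / (4 * m)) ^ 2 * (Vr ^ 2 / 9) ≤ ∫ q in Ω ×ˢ Ω, dist q.1 q.2 ^ 2 := by
    refine le_trans ?_ hkey
    have h2 : (0:ℝ) ≤ 2 * (D / (4 * m)) ^ 2 := by positivity
    nlinarith [hprod]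
  show D ^ 2 * Vr / (16 * m * (m + 1) ^ 2 * (m + 2)) ≤ momentOfInertia Ω
  rw [momentOfInertia, ← hVdef, ← hVrdef]
  have hmono : (1 / (2 * Vr)) * (2 * (D / (4 * m)) ^ 2 * (Vr ^ 2 / 9)) ≤
      (1 / (2 * Vr)) * ∫ q in Ω ×ˢ Ω, dist q.1 q.2 ^ 2 :=
    mul_le_mul_of_nonneg_left hI (by positivity)
  refine le_trans ?_ hmono
  have hRHS : (1 / (2 * Vr)) * (2 * (D / (4 * m)) ^ 2 * (Vr ^ 2 / 9)) =
      D ^ 2 * Vr / (144 * m ^ 2) := by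
    field_simp
    ring
  rw [hRHS, div_le_div_iff₀ (by positivity) (by positivity)]
  have h9 : (144:ℝ) * m ^ 2 ≤ 16 * m * (m + 1) ^ 2 * (m + 2) := by
    nlinarith [hmR, hmpos, sq_nonneg ((m:ℝ) - 2), mul_pos hmpos hmpos]
  have h10 : (0:ℝ) ≤ D ^ 2 * Vr := by positivity
  nlinarith [mul_le_mul_of_nonneg_left h9 h10]
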